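/- Let F be a field of characteristic 0 and let φ ∈ F[x,y,z] be a homogeneous polynomial of even degree 2n satisfying -2y·φ_x + z·φ_y = 0. Then there exist a ∈ F and a homogeneous polynomial ψ ∈ F[x,y,z] of degree 2n-1 with -2y·ψ_x + z·ψ_y = 0 such that φ = a·(xz + y²)ⁿ + z·ψ. -/

import Mathlib

open MvPolynomial

/-- Coefficient of a partial derivative. -/
lemma coeff_pderiv_aux {σ R : Type*} [CommRing R] [DecidableEq σ] (i : σ) (m : σ →₀ ℕ)
    (p : MvPolynomial σ R) :
    coeff m (pderiv i p) = ((m i + 1 : ℕ) : R) * coeff (m + Finsupp.single i 1) p := by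
  induction p using MvPolynomial.induction_on' with
  | add p q hp hq => simp [hp, hq, mul_add]
  | monomial s a =>
    rw [pderiv_monomial, coeff_monomial, coeff_monomial]
    by_cases h : s = m + Finsupp.single i 1
    · subst h
      rw [if_pos (add_tsub_cancel_right _ _), if_pos rfl]
      simp [mul_comm]
    · rw [if_neg h]
      by_cases h' : s - Finsupp.single i 1 = m
      · rw [if_pos h']
        rcases Nat.eq_zero_or_pos (s i) with h0 | h0
        · simp [h0]
        · exact absurd (by rw [← h', tsub_add_cancel_of_le (by rwa [Finsupp.single_le_iff])]) h
      · rw [if_neg h', mul_zero]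

lemma X_dvd_of_coeff {σ R : Type*} [CommRing R] (i : σ) {p : MvPolynomial σ R}
    (h : ∀ m : σ →₀ ℕ, m i = 0 → coeff m p = 0) : X i ∣ p := by
  rw [← support_sum_monomial_coeff p]
  refine Finset.dvd_sum fun m hm => ?_
  rw [X_dvd_monomial]
  rcases Nat.eq_zero_or_pos (m i) with h0 | h0
  · exact Or.inl (h m h0)
  · exact Or.inr (Nat.pos_iff_ne_zero.mp h0)

lemma pow_xz_y2 (F : Type*) [Field F] (n : ℕ) :
    ∃ r : MvPolynomial (Fin 3) F,
      (X 0 * X 2 + X 1 ^ 2) ^ n = X 1 ^ (2 * n) + X 2 * r := by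
  induction n with
  | zero => exact ⟨0, by simp⟩
  | succ k ih =>
    obtain ⟨r, hr⟩ := ih
    refine ⟨X 0 * X 1 ^ (2 * k) + r * (X 0 * X 2 + X 1 ^ 2), ?_⟩
    rw [pow_succ, hr]
    ring

/-- A homogeneous solution of -2y φ_x + z φ_y = 0 of even degree 2n has the form
a (xz+y²)ⁿ + z ψ, where ψ is a homogeneous solution of degree 2n-1. -/
theorem even_degree_solution (F : Type*) [Field F] [CharZero F]
    (n : ℕ) (φ : MvPolynomial (Fin 3) F)
    (hhom : φ.IsHomogeneous (2 * n))
    (hpde : -(2 * X 1 * pderiv 0 φ) + X 2 * pderiv 1 φ = 0) :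
    ∃ (a : F) (ψ : MvPolynomial (Fin 3) F),
      ψ.IsHomogeneous (2 * n - 1) ∧
      -(2 * X 1 * pderiv 0 ψ) + X 2 * pderiv 1 ψ = 0 ∧
      φ = C a * (X 0 * X 2 + X 1 ^ 2) ^ n + X 2 * ψ := by
  classical
  set a : F := coeff (Finsupp.single 1 (2 * n)) φ with ha
  -- Step A: coefficients with z-exponent 0 and positive x-exponent vanish
  have keyA : ∀ m : Fin 3 →₀ ℕ, m 2 = 0 → m 0 ≠ 0 → coeff m φ = 0 := by
    intro m h2 h0
    set d : Fin 3 →₀ ℕ := (m - Finsupp.single 0 1) + Finsupp.single 1 1 with hd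
    have hco := congrArg (coeff d) hpde
    have hd2 : d 2 = 0 := by
      rw [hd, Finsupp.add_apply, Finsupp.tsub_apply, h2,
        Finsupp.single_eq_of_ne (by decide), Finsupp.single_eq_of_ne (by decide)]
      rfl
    rw [coeff_add, coeff_zero, coeff_neg, coeff_X_mul'] at hco
    rw [if_neg (Finsupp.notMem_support_iff.mpr hd2)] at hco
    have h2C : (2 : MvPolynomial (Fin 3) F) = C 2 := (map_ofNat C 2).symm
    rw [mul_assoc, h2C, coeff_C_mul] at hco
    have hdd : d = Finsupp.single 1 1 + (m - Finsupp.single 0 1) := by rw [hd, add_comm]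
    rw [hdd, coeff_X_mul, coeff_pderiv_aux] at hco
    have hms : m - Finsupp.single 0 1 + Finsupp.single 0 1 = m :=
      tsub_add_cancel_of_le (by rwa [Finsupp.single_le_iff, Nat.one_le_iff_ne_zero])
    rw [hms] at hco
    have hm0 : (m - Finsupp.single 0 1 : Fin 3 →₀ ℕ) 0 + 1 = m 0 := by
      rw [Finsupp.tsub_apply, Finsupp.single_apply, if_pos rfl]
      omega
    rw [hm0, add_zero, neg_eq_zero] at hco
    have : (2 : F) * ((m 0 : F) * coeff m φ) = 0 := hco
    have h2ne : (2 : F) ≠ 0 := two_ne_zero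
    have hmne : ((m 0 : F)) ≠ 0 := Nat.cast_ne_zero.mpr h0
    rcases mul_eq_zero.mp this with h | h
    · exact absurd h h2ne
    rcases mul_eq_zero.mp h with h' | h'
    · exact absurd h' hmne
    · exact h'
  -- Step B: coefficients with z-exponent 0 vanish unless m = single 1 (2n)
  have keyB : ∀ m : Fin 3 →₀ ℕ, m 2 = 0 → m ≠ Finsupp.single 1 (2 * n) → coeff m φ = 0 := by
    intro m h2 hne
    rcases Nat.eq_zero_or_pos (m 0) with h0 | h0
    · by_contra hc
      have hdeg : Finsupp.weight 1 m = 2 * n := hhom hc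
      have hm : m = Finsupp.single 1 (m 1) := by
        ext j
        fin_cases j <;> simp [h0, h2, Finsupp.single_apply]
      rw [hm] at hdeg
      have hw : Finsupp.weight (1 : Fin 3 → ℕ) (Finsupp.single 1 (m 1)) = m 1 := by
        simp [Finsupp.weight_apply, Finsupp.sum_single_index]
      rw [hw] at hdeg
      exact hne (by rw [hm, hdeg])
    · exact keyA m h2 (Nat.pos_iff_ne_zero.mp h0)
  -- Step C: divisibility
  obtain ⟨r, hr⟩ := pow_xz_y2 F n
  have hdvd : X 2 ∣ φ - C a * (X 0 * X 2 + X 1 ^ 2) ^ n := by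
    rw [hr, mul_add, ← mul_assoc, mul_comm (C a) (X 2), mul_assoc]
    rw [show φ - (C a * X 1 ^ (2 * n) + X 2 * (C a * r))
        = (φ - C a * X 1 ^ (2 * n)) - X 2 * (C a * r) by ring]
    refine dvd_sub (X_dvd_of_coeff 2 fun m hm2 => ?_) (Dvd.intro _ rfl)
    rw [coeff_sub, coeff_C_mul, X_pow_eq_monomial, coeff_monomial]
    by_cases hm : m = Finsupp.single 1 (2 * n)
    · rw [if_pos hm.symm, mul_one, hm, ← ha, sub_self]
    · rw [if_neg (fun h => hm h.symm), mul_zero, sub_zero, keyB m hm2 hm]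
  obtain ⟨ψ, hψ⟩ := hdvd
  have hφeq : φ = C a * (X 0 * X 2 + X 1 ^ 2) ^ n + X 2 * ψ := by
    rw [← hψ]; ring
  refine ⟨a, ψ, ?_, ?_, hφeq⟩
  -- homogeneity of ψ
  · have hun : ((X 0 * X 2 + X 1 ^ 2 : MvPolynomial (Fin 3) F) ^ n).IsHomogeneous (2 * n) := by
      have : ((X 0 * X 2 + X 1 ^ 2 : MvPolynomial (Fin 3) F)).IsHomogeneous 2 := by
        have h1 : ((X 0 * X 2 : MvPolynomial (Fin 3) F)).IsHomogeneous 2 :=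
          (isHomogeneous_X F 0).mul (isHomogeneous_X F 2)
        have h2 : ((X 1 ^ 2 : MvPolynomial (Fin 3) F)).IsHomogeneous 2 :=
          ((isHomogeneous_X F 1).pow 2 : _)
        exact h1.add h2
      exact this.pow n
    have hC : ((C a * (X 0 * X 2 + X 1 ^ 2) ^ n : MvPolynomial (Fin 3) F)).IsHomogeneous (2 * n) := by
      have := (isHomogeneous_C (Fin 3) a).mul hun
      rwa [zero_add] at this
    have hXψ : ((X 2 * ψ : MvPolynomial (Fin 3) F)).IsHomogeneous (2 * n) :=
      hψ ▸ hhom.sub hC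
    intro d hd
    have hco : coeff (Finsupp.single 2 1 + d) (X 2 * ψ) ≠ 0 := by
      rwa [coeff_X_mul]
    have := hXψ hco
    rw [map_add] at this
    have hw1 : Finsupp.weight (1 : Fin 3 → ℕ) (Finsupp.single 2 1) = 1 := by
      simp [Finsupp.weight_apply, Finsupp.sum_single_index]
    rw [hw1] at this
    omega
  -- PDE for ψ
  · have hX2 : (X 2 : MvPolynomial (Fin 3) F) ≠ 0 := X_ne_zero 2
    have h20 : (2 : Fin 3) ≠ 0 := by decide
    have h21 : (2 : Fin 3) ≠ 1 := by decide
    have h01 : (0 : Fin 3) ≠ 1 := by decide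
    have h10 : (1 : Fin 3) ≠ 0 := by decide
    have hexp : -(2 * X 1 * pderiv 0 φ) + X 2 * pderiv 1 φ
        = X 2 * (-(2 * X 1 * pderiv 0 ψ) + X 2 * pderiv 1 ψ) := by
      rw [hφeq]
      simp only [map_add, pderiv_C_mul, pderiv_mul, pderiv_pow, pderiv_X_self,
        pderiv_X_of_ne h20, pderiv_X_of_ne h21, pderiv_X_of_ne h01, pderiv_X_of_ne h10,
        pderiv_C, map_pow]
      ring
    rw [hexp] at hpde
    rcases mul_eq_zero.mp hpde with h | h
    · exact absurd h hX2
    · exact h
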